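/- For t ≥ 3, the set { {i,j}_t : ij ∈ E(G) } of all vertices newly contracted at step t forms an independent set in S[G,t]. -/

import Mathlib

variable {V : Type*}

/-- Adjacency of the generalized Sierpiński graph `S(G,t)` on words of length `t`:
`u` and `v` are adjacent iff there is an index `i` with `u j = v j` for `j < i`,
`u i` adjacent to `v i` in `G`, and `u j = v i`, `v j = u i` for `j > i`. -/
def sierAdj (G : SimpleGraph V) (t : ℕ) (u v : Fin t → V) : Prop :=
  ∃ i : Fin t, (∀ j, j < i → u j = v j) ∧ G.Adj (u i) (v i) ∧
    ∀ j, i < j → u j = v i ∧ v j = u i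

/-- The generalized Sierpiński graph `S(G,t)`. -/
def sier (G : SimpleGraph V) (t : ℕ) : SimpleGraph (Fin t → V) where
  Adj := sierAdj G t
  symm := by
    constructor
    rintro u v ⟨i, h1, h2, h3⟩
    exact ⟨i, fun j hj => (h1 j hj).symm, h2.symm,
      fun j hj => ⟨(h3 j hj).2, (h3 j hj).1⟩⟩
  loopless := by
    constructor
    rintro u ⟨i, h1, h2, h3⟩
    exact G.loopless.irrefl _ h2

/-- `linkingAt G t p u v` : `uv` is a linking edge of `S(G,t)` appearing at
(0-indexed) position `p < t - 1`; in the paper's terminology this linking edge is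
produced at step `t - p`, and its contraction is a vertex contracted at step `t - p`. -/
def linkingAt (G : SimpleGraph V) (t p : ℕ) (u v : Fin t → V) : Prop :=
  ∃ i : Fin t, i.val = p ∧ i.val + 1 < t ∧ (∀ j, j < i → u j = v j) ∧
    G.Adj (u i) (v i) ∧ ∀ j, i < j → u j = v i ∧ v j = u i

/-- `uv` is a linking edge of `S(G,t)` (an edge appearing at some step `≥ 2`). -/
def linking (G : SimpleGraph V) (t : ℕ) (u v : Fin t → V) : Prop :=
  ∃ p, linkingAt G t p u v

/-- The equivalence relation on words generated by identifying the two endpoints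
of each linking edge. -/
def gasketSetoid (G : SimpleGraph V) (t : ℕ) : Setoid (Fin t → V) :=
  Relation.EqvGen.setoid (linking G t)

/-- The generalized Sierpiński gasket graph `S[G,t]`, obtained from `S(G,t)` by
contracting all linking edges. -/
def gasket (G : SimpleGraph V) (t : ℕ) :
    SimpleGraph (Quotient (gasketSetoid G t)) where
  Adj x y := x ≠ y ∧ ∃ u v, Quotient.mk (gasketSetoid G t) u = x ∧
    Quotient.mk (gasketSetoid G t) v = y ∧ sierAdj G t u v
  symm := by
    constructor
    rintro x y ⟨hxy, u, v, hu, hv, h⟩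
    exact ⟨hxy.symm, v, u, hv, hu, (sier G t).symm.symm _ _ h⟩
  loopless := ⟨fun _ h => h.1 rfl⟩

/-- The expanded word `i j j ... j`; for `ij ∈ E(G)` its class in `S[G,t]` is the
contracted vertex `{i,j}_t`. -/
def topWord (t : ℕ) (i j : V) : Fin t → V := fun k => if k.val = 0 then i else j

lemma topWord_ne_zero {t : ℕ} (a b : V) (x : Fin t) (hx : x.val ≠ 0) :
    topWord t a b x = b := by simp [topWord, hx]

lemma linking_symm {G : SimpleGraph V} {t : ℕ} {u v : Fin t → V}
    (h : linking G t u v) : linking G t v u := by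
  obtain ⟨p, m, hm, hmt, hpre, hA, htail⟩ := h
  exact ⟨p, m, hm, hmt, fun j hj => (hpre j hj).symm, hA.symm,
    fun j hj => ⟨(htail j hj).2, (htail j hj).1⟩⟩

lemma linking_topWord {G : SimpleGraph V} {t : ℕ} (ht : 3 ≤ t) {a b : V}
    {u : Fin t → V} (h : linking G t (topWord t a b) u) : u = topWord t b a := by
  obtain ⟨p, m, hm, hmt, hpre, hA, htail⟩ := h
  have hm1 : (⟨m.val + 1, hmt⟩ : Fin t).val ≠ 0 := by simp
  have hum : u m = b := by
    have := (htail ⟨m.val + 1, hmt⟩ (by simp [Fin.lt_def])).1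
    rw [topWord_ne_zero a b _ hm1] at this
    exact this.symm
  by_cases h0 : m.val = 0
  · -- u m = b, u j = a for j > m
    funext x
    by_cases hx : x.val = 0
    · have hxm : x = m := Fin.ext (by omega)
      rw [hxm, hum, topWord]
      simp [hx, hxm ▸ hx]
    · have hlt : m < x := by rw [Fin.lt_def]; omega
      have h2 := (htail x hlt).2
      rw [topWord] at h2
      simp only [h0, if_true] at h2
      rw [h2, topWord]
      simp [hx]
  · -- contradiction: Adj b b
    have hm0 : topWord t a b m = b := topWord_ne_zero a b m h0
    rw [hm0, hum] at hA
    exact absurd hA (G.loopless.irrefl b)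

lemma class_topWord {G : SimpleGraph V} {t : ℕ} (ht : 3 ≤ t) {a b : V}
    {w : Fin t → V} (h : Relation.EqvGen (linking G t) w (topWord t a b)) :
    w = topWord t a b ∨ w = topWord t b a := by
  have key : ∀ u v : Fin t → V, Relation.EqvGen (linking G t) u v →
      ((u = topWord t a b ∨ u = topWord t b a) ↔
       (v = topWord t a b ∨ v = topWord t b a)) := by
    intro u v h
    induction h with
    | rel u v huv =>
      constructor
      · rintro (rfl | rfl)
        · exact Or.inr (linking_topWord ht huv)
        · exact Or.inl (linking_topWord ht huv)
      · rintro (rfl | rfl)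
        · exact Or.inr (linking_topWord ht (linking_symm huv))
        · exact Or.inl (linking_topWord ht (linking_symm huv))
    | refl u => exact Iff.rfl
    | symm u v _ ih => exact ih.symm
    | trans u v w _ _ ih1 ih2 => exact ih1.trans ih2
  exact (key w (topWord t a b) h).mpr (Or.inl rfl)

lemma topWord_const {t : ℕ} {a b : V} {u : Fin t → V}
    (h : u = topWord t a b ∨ u = topWord t b a) {x y : Fin t}
    (hx : x.val ≠ 0) (hy : y.val ≠ 0) : u x = u y := by
  rcases h with rfl | rfl <;>
    rw [topWord_ne_zero _ _ _ hx, topWord_ne_zero _ _ _ hy]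

/-- for `t ≥ 3`, the set of vertices `{i,j}_t` newly contracted at step `t`
(the classes of the words `ijj...j` for `ij ∈ E(G)`) is an independent set in `S[G,t]`. -/
theorem stmt_7 (G : SimpleGraph V) (t : ℕ) (ht : 3 ≤ t) (i j k l : V)
    (hij : G.Adj i j) (hkl : G.Adj k l) :
    ¬ (gasket G t).Adj (Quotient.mk (gasketSetoid G t) (topWord t i j))
        (Quotient.mk (gasketSetoid G t) (topWord t k l)) := by
  rintro ⟨hne, u, v, hu, hv, ⟨m, hpre, hA, htail⟩⟩
  have Pu := class_topWord ht (Quotient.exact hu)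
  have Pv := class_topWord ht (Quotient.exact hv)
  by_cases hmt : m.val + 1 < t
  · -- the edge is a linking edge, so the two classes coincide
    have hlink : linking G t u v := ⟨m.val, m, rfl, hmt, hpre, hA, htail⟩
    exact hne (hu.symm.trans ((Quotient.sound (Relation.EqvGen.rel _ _ hlink)).trans hv))
  · -- m is the last index, m.val = t - 1 ≥ 2
    have hm : m.val = t - 1 := by have := m.isLt; omega
    have h1t : (1 : ℕ) < t := by omega
    have h1m : (⟨1, h1t⟩ : Fin t) < m := by simp [Fin.lt_def]; omega
    have h1 : u ⟨1, h1t⟩ = v ⟨1, h1t⟩ := hpre _ h1m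
    have hu1 : u m = u ⟨1, h1t⟩ := topWord_const Pu (by omega) (by simp)
    have hv1 : v ⟨1, h1t⟩ = v m := topWord_const Pv (by simp) (by omega)
    rw [hu1, h1, hv1] at hA
    exact absurd hA (G.loopless.irrefl _)
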